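/- Let H be a connected Γ-graded algebra over a field k, {z_ξ}_{ξ∈Ξ} a family of homogeneous elements of H_+, ◁ a total order on Ξ, and h: Ξ → ℕ∪{∞} with h(ξ) ≥ 2 for each ξ, satisfying conditions (a)–(c). Then for each V = (ν_1,…,ν_s) ∈ P(Ξ): if Π(V) ∉ P(Ξ,◁,h) then z_V ∈ Span({z_W : W ∈ P(Ξ,◁,h), W ◁_R Π(V)}), while if Π(V) ∈ P(Ξ,◁,h) then z_V ∈ (∏_{1≤i<j≤s with ν_i ▷ ν_j} a_{ν_i,ν_j})·z_{Π(V)} + Span({z_W : W ∈ P(Ξ,◁,h), W ◁_R Π(V)}). -/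

import Mathlib

open scoped TensorProduct
open Classical

noncomputable section

namespace AdamsPaper

variable {k : Type*} [Field k] {σ : Type*} {H : Type*}

/-- A connected `Γ`-graded algebra structure, `Γ = σ →₀ ℕ` a free abelian monoid. -/
def IsConnGradedAlg [Nonempty σ] [DecidableEq σ] [Ring H] [Algebra k H]
    (𝒜 : (σ →₀ ℕ) → Submodule k H) : Prop :=
  DirectSum.IsInternal 𝒜 ∧ (1 : H) ∈ 𝒜 0 ∧
    (∀ α β : σ →₀ ℕ, ∀ x ∈ 𝒜 α, ∀ y ∈ 𝒜 β, x * y ∈ 𝒜 (α + β)) ∧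
    Module.finrank k (𝒜 0) = 1

/-- A connected `Γ`-graded Hopf algebra: the grading is compatible with all structure maps. -/
def IsConnGradedHopf [Nonempty σ] [DecidableEq σ] [Ring H] [HopfAlgebra k H]
    (𝒜 : (σ →₀ ℕ) → Submodule k H) : Prop :=
  IsConnGradedAlg (k := k) 𝒜 ∧
    (∀ γ : σ →₀ ℕ, ∀ x ∈ 𝒜 γ,
      Coalgebra.comul (R := k) x ∈
        ⨆ p : {p : (σ →₀ ℕ) × (σ →₀ ℕ) // p.1 + p.2 = γ},
          LinearMap.range (TensorProduct.mapIncl (𝒜 p.1.1) (𝒜 p.1.2))) ∧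
    (∀ γ : σ →₀ ℕ, γ ≠ 0 → ∀ x ∈ 𝒜 γ, Coalgebra.counit (R := k) x = 0)

/-- Convolution product of linear endomorphisms of a bialgebra. -/
def conv [Ring H] [Bialgebra k H] (f g : H →ₗ[k] H) : H →ₗ[k] H :=
  LinearMap.mul' k H ∘ₗ TensorProduct.map f g ∘ₗ Coalgebra.comul (R := k)

/-- The convolution unit `η ∘ ε`. -/
def convOne [Ring H] [Bialgebra k H] : H →ₗ[k] H :=
  Algebra.linearMap k H ∘ₗ Coalgebra.counit (R := k)

/-- Convolution powers. -/
def convPow [Ring H] [Bialgebra k H] (f : H →ₗ[k] H) : ℕ → (H →ₗ[k] H)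
  | 0 => convOne
  | n + 1 => conv f (convPow f n)

/-- The Adams operators `Ψ_n`, `n ∈ ℤ`: convolution powers of the identity for `n ≥ 0`,
convolution powers of the antipode for `n < 0`. -/
def adams [Ring H] [HopfAlgebra k H] (n : ℤ) : H →ₗ[k] H :=
  if 0 ≤ n then convPow (LinearMap.id : H →ₗ[k] H) n.toNat
  else convPow (HopfAlgebra.antipode (R := k) (A := H)) (-n).toNat

variable {Ξ : Type*}

/-- `z_V`, the ordered product of the family along a finite sequence `V`. -/
def zProd [Ring H] (z : Ξ → H) (V : List Ξ) : H := (V.map z).prod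

/-- `|V|`, the degree of a finite sequence. -/
def degList (d : Ξ → σ →₀ ℕ) (V : List Ξ) : σ →₀ ℕ := (V.map d).sum

/-- The number of occurrences of `ξ` in `V`. -/
def cnt (V : List Ξ) (ξ : Ξ) : ℕ := (V.map fun a => if a = ξ then 1 else 0).sum

/-- `V ∈ P(Ξ,◁,h)`: `V` is nondecreasing with respect to `◁` and each element occurs
fewer than `h ξ` times. -/
def Adm (lt : Ξ → Ξ → Prop) (h : Ξ → ℕ∞) (V : List Ξ) : Prop :=
  V.Chain' (fun a b => lt a b ∨ a = b) ∧ ∀ ξ : Ξ, (cnt V ξ : ℕ∞) < h ξ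

/-- The subspace `H[ξ,◁,h]`: the span of the `z_V` with `V ∈ P(Ξ,◁,h)` whose last entry
is `◁ ξ`. -/
def Hspan [Ring H] [Algebra k H] (z : Ξ → H) (lt : Ξ → Ξ → Prop) (h : Ξ → ℕ∞)
    (ξ : Ξ) : Submodule k H :=
  Submodule.span k {x : H | ∃ V : List Ξ, Adm lt h V ∧ (∀ ν ∈ V.getLast?, lt ν ξ) ∧
    x = zProd z V}

/-- `A_+`, the span of the components of nonzero degree of a (homogeneous) subspace `A`. -/
def posPart [Ring H] [Algebra k H] (𝒜 : (σ →₀ ℕ) → Submodule k H)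
    (A : Submodule k H) : Submodule k H :=
  ⨆ γ : {γ : σ →₀ ℕ // γ ≠ 0}, A ⊓ 𝒜 γ.1

/-- Comparison of two finite sequences of the same degree, reading from the left. -/
def ltFromLeft (lt : Ξ → Ξ → Prop) (U V : List Ξ) : Prop :=
  ∃ l : ℕ, 1 ≤ l ∧ l ≤ min U.length V.length ∧
    (∀ i : ℕ, i + 1 < l → U[i]? = V[i]?) ∧
    ∃ a b, U[l - 1]? = some a ∧ V[l - 1]? = some b ∧ lt a b

/-- The order `◁_L` on finite sequences. -/
def ltL (d : Ξ → σ →₀ ℕ) (lt : Ξ → Ξ → Prop) (U V : List Ξ) : Prop :=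
  (∃ γ : σ →₀ ℕ, γ ≠ 0 ∧ degList d U + γ = degList d V) ∨
    (degList d U = degList d V ∧ ltFromLeft lt U V)

/-- The order `◁_R` on finite sequences. -/
def ltR (d : Ξ → σ →₀ ℕ) (lt : Ξ → Ξ → Prop) (U V : List Ξ) : Prop :=
  (∃ γ : σ →₀ ℕ, γ ≠ 0 ∧ degList d U + γ = degList d V) ∨
    (degList d U = degList d V ∧ ltFromLeft lt U.reverse V.reverse)

end AdamsPaper

end

namespace AdamsPaper

open scoped Classical in
/-- The coefficient `∏_{1 ≤ i < j ≤ s, ν_i ▷ ν_j} a_{ν_i, ν_j}` attached to a sequence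
`V = (ν_1, …, ν_s)`. -/
noncomputable def rearrCoeff {k Ξ : Type*} [Field k] (a : Ξ → Ξ → k)
    (lt : Ξ → Ξ → Prop) (V : List Ξ) : k :=
  ∏ p ∈ Finset.univ.filter
      (fun p : Fin V.length × Fin V.length => p.1 < p.2 ∧ lt (V.get p.2) (V.get p.1)),
    a (V.get p.1) (V.get p.2)


section ListHelpers
variable {Ξ : Type*} {σ : Type*} {lt : Ξ → Ξ → Prop}

theorem isTrans_le [IsTrans Ξ lt] : IsTrans Ξ (fun a b => lt a b ∨ a = b) := by
  constructor
  rintro a b c (hab | rfl) (hbc | rfl)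
  · exact Or.inl (_root_.trans hab hbc)
  · exact Or.inl hab
  · exact Or.inl hbc
  · exact Or.inr rfl

theorem isAntisymm_le [IsStrictTotalOrder Ξ lt] :
    IsAntisymm Ξ (fun a b => lt a b ∨ a = b) := by
  constructor
  rintro a b (hab | rfl) (hba | h)
  · exact absurd hba (asymm hab)
  · exact h.symm
  · rfl
  · rfl

theorem isTotal_le [IsStrictTotalOrder Ξ lt] : IsTotal Ξ (fun a b => lt a b ∨ a = b) := by
  constructor
  intro a b
  rcases trichotomous_of lt a b with h | h | h
  · exact Or.inl (Or.inl h)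
  · exact Or.inl (Or.inr h)
  · exact Or.inr (Or.inl h)

theorem isAntisymm_ge [IsStrictTotalOrder Ξ lt] :
    IsAntisymm Ξ (fun a b => lt b a ∨ b = a) := by
  constructor
  rintro a b (hab | rfl) (hba | h)
  · exact absurd hba (asymm hab)
  · exact h
  · rfl
  · rfl

theorem isTrans_ge [IsTrans Ξ lt] : IsTrans Ξ (fun a b => lt b a ∨ b = a) := by
  constructor
  rintro a b c (hab | rfl) (hbc | rfl)
  · exact Or.inl (_root_.trans hbc hab)
  · exact Or.inl hab
  · exact Or.inl hbc
  · exact Or.inr rfl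

theorem pairwise_replicate_of {r : Ξ → Ξ → Prop} {β : Ξ} (h : r β β) (n : ℕ) :
    (List.replicate n β).Pairwise r := by
  induction n with
  | zero => exact List.Pairwise.nil
  | succ n ih =>
      rw [List.replicate_succ, List.pairwise_cons]
      refine ⟨fun b hb => ?_, ih⟩
      rw [List.eq_of_mem_replicate hb]
      exact h

theorem ltFromLeft_trans [IsTrans Ξ lt] {U V W : List Ξ}
    (h1 : ltFromLeft lt U V) (h2 : ltFromLeft lt V W) : ltFromLeft lt U W := by
  obtain ⟨l1, hl11, hl12, hag1, a, b, ha, hb, hab⟩ := h1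
  obtain ⟨l2, hl21, hl22, hag2, c, e, hc, he, hce⟩ := h2
  refine ⟨min l1 l2, le_min hl11 hl21, ?_, ?_, ?_⟩
  · exact le_min ((min_le_left _ _).trans (hl12.trans (min_le_left _ _)))
      ((min_le_right _ _).trans (hl22.trans (min_le_right _ _)))
  · intro i hi
    rw [hag1 i (lt_of_lt_of_le hi (min_le_left _ _)),
      hag2 i (lt_of_lt_of_le hi (min_le_right _ _))]
  · rcases lt_trichotomy l1 l2 with h | h | h
    · have hmin : min l1 l2 = l1 := min_eq_left h.le
      have : V[l1 - 1]? = W[l1 - 1]? := hag2 _ (by omega)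
      exact ⟨a, b, by rwa [hmin], by rw [hmin, ← this]; exact hb, hab⟩
    · subst h
      have hmin : min l1 l1 = l1 := min_self _
      rw [hb] at hc
      obtain rfl : b = c := by injection hc
      exact ⟨a, e, by rwa [hmin], by rwa [hmin], _root_.trans hab hce⟩
    · have hmin : min l1 l2 = l2 := min_eq_right h.le
      have : U[l2 - 1]? = V[l2 - 1]? := hag1 _ (by omega)
      exact ⟨c, e, by rw [hmin, this]; exact hc, by rwa [hmin], hce⟩

theorem finsupp_add_eq_zero {γ₁ γ₂ : σ →₀ ℕ} (h : γ₁ + γ₂ = 0) : γ₁ = 0 := by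
  ext s
  have := congrArg (fun f : σ →₀ ℕ => f s) h
  simp only [Finsupp.add_apply, Finsupp.coe_zero, Pi.zero_apply] at this
  simpa using Nat.eq_zero_of_add_eq_zero_right (by omega : γ₁ s + γ₂ s = 0)

theorem ltR_trans [IsTrans Ξ lt] {d : Ξ → σ →₀ ℕ} {U V W : List Ξ}
    (h1 : ltR d lt U V) (h2 : ltR d lt V W) : ltR d lt U W := by
  rcases h1 with ⟨γ₁, hγ1, hd1⟩ | ⟨hd1, hf1⟩
  · rcases h2 with ⟨γ₂, hγ2, hd2⟩ | ⟨hd2, hf2⟩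
    · refine Or.inl ⟨γ₁ + γ₂, ?_, by rw [← hd2, ← hd1, add_assoc]⟩
      intro h0; exact hγ1 (finsupp_add_eq_zero h0)
    · exact Or.inl ⟨γ₁, hγ1, by rw [hd1, hd2]⟩
  · rcases h2 with ⟨γ₂, hγ2, hd2⟩ | ⟨hd2, hf2⟩
    · exact Or.inl ⟨γ₂, hγ2, by rw [hd1, hd2]⟩
    · exact Or.inr ⟨hd1.trans hd2, ltFromLeft_trans hf1 hf2⟩

theorem takeWhile_eq_filter_of_pairwise {R : Ξ → Ξ → Prop} {q : Ξ → Bool} :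
    ∀ {l : List Ξ}, l.Pairwise R → (∀ a b, R a b → q b = true → q a = true) →
      l.takeWhile q = l.filter q := by
  intro l
  induction l with
  | nil => intro _ _; rfl
  | cons x xs ih =>
      intro hp hq
      have hx := List.pairwise_cons.mp hp
      by_cases hqx : q x = true
      · rw [List.takeWhile_cons_of_pos hqx, List.filter_cons_of_pos hqx, ih hx.2 hq]
      · rw [List.takeWhile_cons_of_neg hqx, List.filter_cons_of_neg hqx]
        symm
        rw [List.filter_eq_nil_iff]
        intro b hb hqb
        exact hqx (hq x b (hx.1 b hb) hqb)

/-- The key combinatorial lemma: replacing, in a multiset, a sub-multiset `B` by a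
nonempty multiset `U` of elements all smaller than some `β ∈ B` (with all of `B` at most
`β`) makes the sorted list strictly smaller in right-to-left lexicographic comparison. -/
theorem key_lemma [IsStrictTotalOrder Ξ lt]
    {P U B W W' : List Ξ} {β : Ξ}
    (hβB : β ∈ B) (hBle : ∀ b ∈ B, lt b β ∨ b = β)
    (hU : U ≠ []) (hUlt : ∀ u ∈ U, lt u β)
    (hW : W.Perm (P ++ B)) (hW' : W'.Perm (P ++ U))
    (hWs : W.Chain' (fun a b => lt a b ∨ a = b))
    (hW's : W'.Chain' (fun a b => lt a b ∨ a = b)) :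
    ltFromLeft lt W'.reverse W.reverse := by
  haveI := isTrans_le (lt := lt)
  haveI := isTrans_ge (lt := lt)
  haveI := isAntisymm_ge (lt := lt)
  set ge' : Ξ → Ξ → Prop := fun a b => lt b a ∨ b = a with hge'
  set p : Ξ → Bool := fun x => decide (¬ lt x β) with hp
  set s : List Ξ := W'.reverse with hs
  set t : List Ξ := W.reverse with ht
  have hps : ∀ x, p x = true ↔ ¬ lt x β := by intro x; simp [hp]
  have hsP : s.Pairwise ge' := by
    rw [hs, List.pairwise_reverse]
    exact List.isChain_iff_pairwise.mp hW's
  have htP : t.Pairwise ge' := by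
    rw [ht, List.pairwise_reverse]
    exact List.isChain_iff_pairwise.mp hWs
  have hdown : ∀ a b, ge' a b → p b = true → p a = true := by
    intro a b hab hb
    rw [hps] at hb ⊢
    intro ha
    rcases hab with h | rfl
    · exact hb (_root_.trans h ha)
    · exact hb ha
  set A : List Ξ := s.takeWhile p with hA
  have hAfilter : A = s.filter p := takeWhile_eq_filter_of_pairwise hsP hdown
  have htake : t.takeWhile p = t.filter p := takeWhile_eq_filter_of_pairwise htP hdown
  set m : ℕ := (B.filter p).length with hm
  have hBrep : B.filter p = List.replicate m β := by
    rw [List.eq_replicate_iff]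
    refine ⟨rfl, ?_⟩
    intro b hb
    obtain ⟨hbB, hbp⟩ := List.mem_filter.mp hb
    rcases hBle b hbB with h | h
    · exact absurd h ((hps b).mp hbp)
    · exact h
  have hmpos : 1 ≤ m := by
    have hβf : β ∈ B.filter p := by
      rw [List.mem_filter]
      exact ⟨hβB, (hps β).mpr (irrefl_of lt β)⟩
    rw [hBrep] at hβf
    have := List.length_pos_of_mem hβf
    simp at this; omega
  have hUfilter : U.filter p = [] := by
    rw [List.filter_eq_nil_iff]
    intro u hu hup
    exact ((hps u).mp hup) (hUlt u hu)
  have hApermP : A.Perm (P.filter p) := by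
    rw [hAfilter]
    have h1 : (s.filter p).Perm ((P ++ U).filter p) := (W'.reverse_perm.trans hW').filter p
    rwa [List.filter_append, hUfilter, List.append_nil] at h1
  have hApw : A.Pairwise ge' := hsP.sublist (List.takeWhile_sublist p)
  have hAt : t.takeWhile p = A ++ List.replicate m β := by
    have hperm : (t.takeWhile p).Perm (A ++ List.replicate m β) := by
      have h2 : (t.filter p).Perm ((P ++ B).filter p) := (W.reverse_perm.trans hW).filter p
      rw [List.filter_append, hBrep] at h2
      rw [htake]
      exact h2.trans ((hApermP.append (List.Perm.refl _)).symm)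
    have hsorted1 : (t.takeWhile p).Pairwise ge' := htP.sublist (List.takeWhile_sublist p)
    have hsorted2 : (A ++ List.replicate m β).Pairwise ge' := by
      rw [List.pairwise_append]
      refine ⟨hApw, pairwise_replicate_of (r := ge') (Or.inr rfl) m, ?_⟩
      intro a ha b hb
      rw [List.eq_of_mem_replicate hb]
      have hpa : ¬ lt a β := (hps a).mp (List.mem_takeWhile_imp ha)
      rcases trichotomous_of lt a β with h | h | h
      · exact absurd h hpa
      · exact Or.inr h.symm
      · exact Or.inl h
    exact List.Perm.eq_of_pairwise' hsorted1 hsorted2 hperm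
  have hs_split : s = A ++ s.dropWhile p := (List.takeWhile_append_dropWhile (p := p) (l := s)).symm
  have ht_split : t = A ++ (List.replicate m β ++ t.dropWhile p) := by
    conv_lhs => rw [← List.takeWhile_append_dropWhile (p := p) (l := t)]
    rw [hAt, List.append_assoc]
  obtain ⟨u, hu⟩ := List.exists_mem_of_ne_nil U hU
  have hus : u ∈ s := (W'.reverse_perm.trans hW').mem_iff.mpr (by simp [hu])
  have hdrop_ne : s.dropWhile p ≠ [] := by
    intro h0
    have : s = A := by rw [hs_split, h0, List.append_nil]
    rw [this] at hus
    exact ((hps u).mp (List.mem_takeWhile_imp hus)) (hUlt u hu)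
  obtain ⟨x, xs, hxs⟩ := List.exists_cons_of_ne_nil hdrop_ne
  have hxp : p x = false := by
    have := List.head?_dropWhile_not p s
    rw [hxs] at this
    exact this
  have hxβ : lt x β := by
    have : ¬ (p x = true) := by rw [hxp]; simp
    rw [hps] at this
    exact not_not.mp this
  obtain ⟨m', hm'⟩ : ∃ m', m = m' + 1 := ⟨m - 1, by omega⟩
  refine ⟨A.length + 1, by omega, ?_, ?_, ?_⟩
  · refine le_min ?_ ?_
    · rw [hs_split, hxs, List.length_append, List.length_cons]
      omega
    · rw [ht_split, List.length_append, List.length_append, List.length_replicate]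
      omega
  · intro i hi
    have hiA : i < A.length := by omega
    rw [hs_split, ht_split, List.getElem?_append_left hiA, List.getElem?_append_left hiA]
  · refine ⟨x, β, ?_, ?_, hxβ⟩
    · rw [hs_split, Nat.add_sub_cancel, List.getElem?_append_right (le_refl _),
        Nat.sub_self, hxs]
      rfl
    · rw [ht_split, Nat.add_sub_cancel, List.getElem?_append_right (le_refl _),
        Nat.sub_self, hm', List.replicate_succ]
      rfl

theorem cnt_eq_filter_length (V : List Ξ) (ξ : Ξ) :
    cnt V ξ = (V.filter (fun x => decide (x = ξ))).length := by
  induction V with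
  | nil => rfl
  | cons x xs ih =>
      have hc : cnt (x :: xs) ξ = (if x = ξ then 1 else 0) + cnt xs ξ := by simp [cnt]
      rw [hc, ih]
      by_cases hx : x = ξ
      · rw [if_pos hx, List.filter_cons_of_pos (by simpa using hx), List.length_cons]
        omega
      · rw [if_neg hx, List.filter_cons_of_neg (by simpa using hx)]
        omega

/-- In a sorted list containing at least `m` copies of `ξ`, the copies can be found
as a consecutive block. -/
theorem sorted_block [IsStrictTotalOrder Ξ lt] {W : List Ξ}
    (hW : W.Chain' (fun a b => lt a b ∨ a = b)) {ξ : Ξ} {m : ℕ} (hm : m ≤ cnt W ξ) :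
    ∃ P₁ P₂ : List Ξ, W = P₁ ++ List.replicate m ξ ++ P₂ := by
  haveI := isTrans_le (lt := lt)
  haveI := isAntisymm_le (lt := lt)
  set le : Ξ → Ξ → Prop := fun a b => lt a b ∨ a = b with hle
  set q1 : Ξ → Bool := fun x => decide (lt x ξ) with hq1
  set q2 : Ξ → Bool := fun x => decide (x = ξ) with hq2
  set W1 : List Ξ := W.filter q1 with hW1
  set Weq : List Ξ := W.filter q2 with hWeq
  set Wgt : List Ξ := W.filter (fun x => decide (lt ξ x)) with hWgt
  set c : ℕ := Weq.length with hc
  have hWpw : W.Pairwise le := List.isChain_iff_pairwise.mp hW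
  have hWeqrep : Weq = List.replicate c ξ := by
    rw [List.eq_replicate_iff]
    refine ⟨rfl, fun b hb => ?_⟩
    rw [hWeq] at hb
    have h2 := List.of_mem_filter hb
    rw [hq2] at h2
    exact of_decide_eq_true h2
  have hperm : W.Perm (W1 ++ (Weq ++ Wgt)) := by
    have h1 : (W.filter q1 ++ W.filter (fun x => !q1 x)).Perm W := List.filter_append_perm q1 W
    have h2 : ((W.filter (fun x => !q1 x)).filter q2 ++
        (W.filter (fun x => !q1 x)).filter (fun x => !q2 x)).Perm (W.filter (fun x => !q1 x)) :=
      List.filter_append_perm q2 _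
    have h3 : (W.filter (fun x => !q1 x)).filter q2 = Weq := by
      rw [List.filter_filter, hWeq]
      apply List.filter_congr
      intro x _
      by_cases hx : x = ξ
      · subst hx
        simp [hq1, hq2, irrefl_of lt x]
      · simp [hq1, hq2, hx]
    have h4 : (W.filter (fun x => !q1 x)).filter (fun x => !q2 x) = Wgt := by
      rw [List.filter_filter, hWgt]
      apply List.filter_congr
      intro x _
      rcases trichotomous_of lt x ξ with h | h | h
      · have hne : x ≠ ξ := by rintro rfl; exact irrefl_of lt x h
        simp [hq1, hq2, h, asymm h, hne]
      · subst h
        simp [hq1, hq2, irrefl_of lt x]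
      · have hne : x ≠ ξ := by rintro rfl; exact irrefl_of lt x h
        simp [hq1, hq2, h, asymm h, hne]
    rw [h3, h4] at h2
    exact h1.symm.trans (List.Perm.append_left W1 h2.symm)
  have hsorted : (W1 ++ (List.replicate c ξ ++ Wgt)).Pairwise le := by
    rw [List.pairwise_append, List.pairwise_append]
    refine ⟨hWpw.sublist (List.filter_sublist (l := W)), ⟨pairwise_replicate_of (r := le) (Or.inr rfl) c,
      hWpw.sublist (List.filter_sublist (l := W)), ?_⟩, ?_⟩
    · intro a ha b hb
      rw [List.eq_of_mem_replicate ha]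
      rw [hWgt] at hb
      have h5 := List.of_mem_filter hb
      exact Or.inl (of_decide_eq_true h5)
    · intro a ha b hb
      have haq : lt a ξ := by
        rw [hW1] at ha
        have := List.of_mem_filter ha
        rw [hq1] at this
        exact of_decide_eq_true this
      rcases List.mem_append.mp hb with hb | hb
      · rw [List.eq_of_mem_replicate hb]
        exact Or.inl haq
      · rw [hWgt] at hb
        have := List.of_mem_filter hb
        exact Or.inl (_root_.trans haq (of_decide_eq_true this))
  have hWdec : W = W1 ++ (List.replicate c ξ ++ Wgt) := by
    apply List.Perm.eq_of_pairwise' hWpw hsorted (hperm.trans ?_)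
    rw [hWeqrep]
  have hcm : m ≤ c := by
    rw [hc, ← cnt_eq_filter_length]
    exact hm
  refine ⟨W1, List.replicate (c - m) ξ ++ Wgt, ?_⟩
  rw [hWdec]
  have : List.replicate c ξ = List.replicate m ξ ++ List.replicate (c - m) ξ := by
    rw [← List.replicate_add]
    congr 1
    omega
  rw [this]
  simp only [List.append_assoc]

theorem all_lt_of_last [IsTrans Ξ lt] {ξ : Ξ} :
    ∀ {U : List Ξ}, U.Chain' (fun a b => lt a b ∨ a = b) →
      (∀ ν ∈ U.getLast?, lt ν ξ) → ∀ u ∈ U, lt u ξ := by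
  intro U
  induction U with
  | nil => intro _ _ u hu; simp at hu
  | cons x xs ih =>
      intro hc hlast u hu
      cases xs with
      | nil =>
          obtain rfl : u = x := by simpa using hu
          exact hlast u (by simp)
      | cons y ys =>
          have hc' : (y :: ys).Chain' (fun a b => lt a b ∨ a = b) := hc.tail
          have hlast' : ∀ ν ∈ (y :: ys).getLast?, lt ν ξ := by
            intro ν hν
            exact hlast ν (by rwa [List.getLast?_cons_cons])
          rcases List.mem_cons.mp hu with rfl | hu'
          · have hxy : lt u y ∨ u = y := (List.isChain_cons_cons.mp hc).1
            have hyξ : lt y ξ := ih hc' hlast' y (by simp)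
            rcases hxy with h | rfl
            · exact _root_.trans h hyξ
            · exact hyξ
          · exact ih hc' hlast' u hu'

theorem not_chain'_decomp [IsStrictTotalOrder Ξ lt] :
    ∀ {V : List Ξ}, ¬ V.Chain' (fun a b => lt a b ∨ a = b) →
      ∃ pre ν μ suf, V = pre ++ ν :: μ :: suf ∧ lt μ ν := by
  intro V
  induction V with
  | nil => intro h; exact absurd List.isChain_nil h
  | cons x xs ih =>
      intro h
      cases xs with
      | nil => exact absurd (List.isChain_singleton x) h
      | cons y ys =>
          unfold List.Chain' at h; rw [List.isChain_cons_cons] at h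
          by_cases hxy : lt x y ∨ x = y
          · have h2 : ¬ (y :: ys).Chain' (fun a b => lt a b ∨ a = b) := fun hcc => h ⟨hxy, hcc⟩
            obtain ⟨pre, ν, μ, suf, heq, hlt'⟩ := ih h2
            exact ⟨x :: pre, ν, μ, suf, by rw [List.cons_append, heq], hlt'⟩
          · have hyx : lt y x := by
              rcases trichotomous_of lt x y with h' | h' | h'
              · exact absurd (Or.inl h') hxy
              · exact absurd (Or.inr h') hxy
              · exact h'
            exact ⟨[], x, y, ys, rfl, hyx⟩

theorem perm_mid (pre U suf : List Ξ) : (pre ++ U ++ suf).Perm ((pre ++ suf) ++ U) := by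
  refine (List.perm_append_comm).trans ?_
  rw [← List.append_assoc]
  exact List.perm_append_comm.append_right U

end ListHelpers

section AlgHelpers
variable {Ξ : Type*} {k σ H : Type*} [Field k] [Ring H] [Algebra k H]

@[simp] theorem zProd_nil (z : Ξ → H) : zProd z [] = 1 := rfl
@[simp] theorem zProd_cons (z : Ξ → H) (x : Ξ) (V : List Ξ) :
    zProd z (x :: V) = z x * zProd z V := by simp [zProd]
theorem zProd_append (z : Ξ → H) (A B : List Ξ) :
    zProd z (A ++ B) = zProd z A * zProd z B := by simp [zProd]
theorem zProd_replicate (z : Ξ → H) (m : ℕ) (ξ : Ξ) :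
    zProd z (List.replicate m ξ) = z ξ ^ m := by
  induction m with
  | zero => simp
  | succ n ih => rw [List.replicate_succ, zProd_cons, ih, pow_succ']

@[simp] theorem degList_nil (d : Ξ → σ →₀ ℕ) : degList d ([] : List Ξ) = 0 := rfl
@[simp] theorem degList_cons (d : Ξ → σ →₀ ℕ) (x : Ξ) (V : List Ξ) :
    degList d (x :: V) = d x + degList d V := by simp [degList]
theorem degList_append (d : Ξ → σ →₀ ℕ) (A B : List Ξ) :
    degList d (A ++ B) = degList d A + degList d B := by simp [degList]
theorem degList_perm (d : Ξ → σ →₀ ℕ) {A B : List Ξ} (h : A.Perm B) :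
    degList d A = degList d B := (h.map d).sum_eq
theorem degList_replicate (d : Ξ → σ →₀ ℕ) (m : ℕ) (ξ : Ξ) :
    degList d (List.replicate m ξ) = m • d ξ := by
  induction m with
  | zero => simp
  | succ n ih => rw [List.replicate_succ, degList_cons, ih, succ_nsmul']

/-- The total weight of an element of the free abelian monoid `σ →₀ ℕ`. -/
def wt (γ : σ →₀ ℕ) : ℕ := γ.sum fun _ n => n

theorem wt_add (α β : σ →₀ ℕ) : wt (α + β) = wt α + wt β :=
  Finsupp.sum_add_index' (fun _ => rfl) (fun _ _ _ => rfl)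

theorem wt_eq_zero {γ : σ →₀ ℕ} (h : wt γ = 0) : γ = 0 := by
  ext s
  by_contra hs
  have hmem : s ∈ γ.support := Finsupp.mem_support_iff.mpr (by simpa using hs)
  have := Finset.sum_eq_zero_iff.mp h s hmem
  exact hs (by simpa using this)

theorem one_le_wt {γ : σ →₀ ℕ} (h : γ ≠ 0) : 1 ≤ wt γ :=
  Nat.one_le_iff_ne_zero.mpr (fun h0 => h (wt_eq_zero h0))

theorem length_le_wt_degList {d : Ξ → σ →₀ ℕ} (hd : ∀ ξ, d ξ ≠ 0) (V : List Ξ) :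
    V.length ≤ wt (degList d V) := by
  induction V with
  | nil => simp
  | cons x xs ih =>
      rw [degList_cons, wt_add, List.length_cons]
      have := one_le_wt (hd x)
      omega

theorem mem_deg_le {d : Ξ → σ →₀ ℕ} {x : Ξ} {V : List Ξ} (hx : x ∈ V) :
    d x ≤ degList d V := by
  induction V with
  | nil => simp at hx
  | cons y ys ih =>
      rw [degList_cons]
      rcases List.mem_cons.mp hx with rfl | h
      · exact le_add_of_nonneg_right zero_le
      · exact (ih h).trans (le_add_of_nonneg_left zero_le)

end AlgHelpers

section ProjHelpers
variable {Ξ : Type*} {k σ H : Type*} [Field k] [Nonempty σ] [DecidableEq σ] [Ring H]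
  [Algebra k H] (𝒜 : (σ →₀ ℕ) → Submodule k H)

/-- The projection onto the `γ`-component of an internal direct sum. -/
noncomputable def proj (hInt : DirectSum.IsInternal 𝒜) (γ : σ →₀ ℕ) : H →ₗ[k] H :=
  (𝒜 γ).subtype.comp
    ((DFinsupp.lapply γ : (DirectSum _ fun δ => 𝒜 δ) →ₗ[k] 𝒜 γ).comp
      (LinearEquiv.ofBijective (DirectSum.coeLinearMap 𝒜) hInt).symm.toLinearMap)

theorem proj_of_mem (hInt : DirectSum.IsInternal 𝒜) {γ : σ →₀ ℕ} {x : H} (hx : x ∈ 𝒜 γ) :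
    proj 𝒜 hInt γ x = x := by
  simp only [proj, LinearMap.coe_comp, Function.comp_apply, LinearEquiv.coe_coe,
    DFinsupp.lapply_apply, Submodule.coe_subtype]
  exact congrArg Subtype.val (hInt.ofBijective_coeLinearMap_of_mem hx)

theorem proj_of_mem_ne (hInt : DirectSum.IsInternal 𝒜) {γ δ : σ →₀ ℕ} (hne : δ ≠ γ) {x : H}
    (hx : x ∈ 𝒜 δ) : proj 𝒜 hInt γ x = 0 := by
  simp only [proj, LinearMap.coe_comp, Function.comp_apply, LinearEquiv.coe_coe,
    DFinsupp.lapply_apply, Submodule.coe_subtype]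
  exact congrArg Subtype.val (hInt.ofBijective_coeLinearMap_of_mem_ne hne hx)

theorem span_proj (hInt : DirectSum.IsInternal 𝒜) (γ : σ →₀ ℕ) {T : Set H} {x : H}
    (hx : x ∈ Submodule.span k T) (hxγ : x ∈ 𝒜 γ) :
    x ∈ Submodule.span k ((proj 𝒜 hInt γ) '' T) := by
  have h1 : proj 𝒜 hInt γ x ∈ Submodule.map (proj 𝒜 hInt γ) (Submodule.span k T) :=
    Submodule.mem_map_of_mem hx
  rw [Submodule.map_span] at h1
  rwa [proj_of_mem 𝒜 hInt hxγ] at h1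

theorem zProd_mem {z : Ξ → H} {d : Ξ → σ →₀ ℕ}
    (h1 : (1 : H) ∈ 𝒜 0)
    (hmul : ∀ α β : σ →₀ ℕ, ∀ x ∈ 𝒜 α, ∀ y ∈ 𝒜 β, x * y ∈ 𝒜 (α + β))
    (hz : ∀ ξ, z ξ ∈ 𝒜 (d ξ)) (V : List Ξ) : zProd z V ∈ 𝒜 (degList d V) := by
  induction V with
  | nil => exact h1
  | cons x xs ih =>
      have h2 : zProd z (x :: xs) = z x * zProd z xs := by simp [zProd]
      rw [h2]
      have hdeg : degList d (x :: xs) = d x + degList d xs := by simp [degList]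
      rw [hdeg]
      exact hmul _ _ _ (hz x) _ ih

/-- Refined description of homogeneous elements of `Hspan`. -/
theorem hspan_refine (hInt : DirectSum.IsInternal 𝒜)
    (h1 : (1 : H) ∈ 𝒜 0)
    (hmul : ∀ α β : σ →₀ ℕ, ∀ x ∈ 𝒜 α, ∀ y ∈ 𝒜 β, x * y ∈ 𝒜 (α + β))
    {z : Ξ → H} {d : Ξ → σ →₀ ℕ} (hz : ∀ ξ, z ξ ∈ 𝒜 (d ξ))
    {lt : Ξ → Ξ → Prop} {h : Ξ → ℕ∞} {ξ : Ξ} {γ : σ →₀ ℕ} (hγ : γ ≠ 0) {x : H}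
    (hx : x ∈ Hspan (k := k) z lt h ξ) (hxγ : x ∈ 𝒜 γ) :
    x ∈ Submodule.span k {y : H | ∃ U : List Ξ, Adm lt h U ∧
      (∀ ν ∈ U.getLast?, lt ν ξ) ∧ degList d U = γ ∧ U ≠ [] ∧ y = zProd z U} := by
  have h2 := span_proj 𝒜 hInt γ hx hxγ
  refine (?_ : Submodule.span k _ ≤ _) h2
  rw [← Submodule.span_insert_zero (s := {y : H | ∃ U : List Ξ, Adm lt h U ∧
      (∀ ν ∈ U.getLast?, lt ν ξ) ∧ degList d U = γ ∧ U ≠ [] ∧ y = zProd z U})]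
  apply Submodule.span_mono
  rintro - ⟨y, ⟨V, hAdm, hlast, rfl⟩, rfl⟩
  by_cases hdeg : degList d V = γ
  · right
    refine ⟨V, hAdm, hlast, hdeg, ?_, ?_⟩
    · rintro rfl
      exact hγ (by simpa using hdeg.symm)
    · rw [proj_of_mem 𝒜 hInt (hdeg ▸ zProd_mem 𝒜 h1 hmul hz V)]
  · left
    exact proj_of_mem_ne 𝒜 hInt hdeg (zProd_mem 𝒜 h1 hmul hz V)

end ProjHelpers

section CoeffHelpers
variable {Ξ : Type*} {k : Type*} [Field k] (a : Ξ → Ξ → k) (lt : Ξ → Ξ → Prop)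

/-- The head factor in the recursion for `rearrCoeff`. -/
noncomputable def hdF (x : Ξ) (l : List Ξ) : k :=
  (l.map fun y => if lt y x then a x y else 1).prod

theorem map_prod_get {M : Type*} [CommMonoid M] (l : List Ξ) (g : Ξ → M) :
    (l.map g).prod = ∏ i : Fin l.length, g (l.get i) := by
  conv_lhs => rw [← List.ofFn_get l, List.map_ofFn, List.prod_ofFn]
  rfl

@[simp] theorem hdF_nil (x : Ξ) : hdF a lt x [] = 1 := rfl
@[simp] theorem hdF_cons (x y : Ξ) (l : List Ξ) :
    hdF a lt x (y :: l) = (if lt y x then a x y else 1) * hdF a lt x l := by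
  simp [hdF]

theorem hdF_perm (x : Ξ) {l₁ l₂ : List Ξ} (h : l₁.Perm l₂) :
    hdF a lt x l₁ = hdF a lt x l₂ :=
  (h.map _).prod_eq

theorem rearrCoeff_cons (x : Ξ) (xs : List Ξ) :
    rearrCoeff a lt (x :: xs) = hdF a lt x xs * rearrCoeff a lt xs := by
  rw [rearrCoeff, rearrCoeff, Finset.prod_filter, Finset.prod_filter,
    Fintype.prod_prod_type, Fintype.prod_prod_type]
  simp only [List.length_cons]
  rw [Fin.prod_univ_succ]
  have hget : ∀ i : Fin xs.length, (x :: xs).get i.succ = xs.get i := by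
    intro i
    simp [Fin.succ]
  congr 1
  · rw [Fin.prod_univ_succ]
    have h0 : (if ((0 : Fin (xs.length + 1)) < (0 : Fin (xs.length + 1)) ∧
        lt ((x::xs).get (0 : Fin (xs.length + 1))) ((x::xs).get (0 : Fin (xs.length + 1))))
        then a ((x::xs).get (0 : Fin (xs.length + 1))) ((x::xs).get (0 : Fin (xs.length + 1)))
        else 1) = 1 := by
      rw [if_neg]
      rintro ⟨h, -⟩
      exact lt_irrefl _ h
    rw [h0, one_mul, hdF, map_prod_get]
    apply Finset.prod_congr rfl
    intro j _
    have hsucclt : (0 : Fin (xs.length + 1)) < j.succ := Fin.succ_pos j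
    rw [hget]
    show (if (0 : Fin (xs.length + 1)) < j.succ ∧ lt (xs.get j) x then a x (xs.get j) else 1)
      = if lt (xs.get j) x then a x (xs.get j) else 1
    simp only [hsucclt, true_and]
  · apply Finset.prod_congr rfl
    intro i _
    rw [Fin.prod_univ_succ]
    have h0 : (if (i.succ : Fin (xs.length + 1)) < (0 : Fin (xs.length + 1)) ∧
        lt ((x::xs).get (0 : Fin (xs.length + 1))) ((x::xs).get i.succ) then
        a ((x::xs).get i.succ) ((x::xs).get (0 : Fin (xs.length + 1))) else 1) = 1 := by
      rw [if_neg]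
      rintro ⟨h, -⟩
      exact (Fin.not_lt_zero _) h
    rw [h0, one_mul]
    apply Finset.prod_congr rfl
    intro j _
    rw [hget, hget]
    congr 1
    simp [Fin.succ_lt_succ_iff]

theorem rearrCoeff_sorted {V : List Ξ} [IsStrictTotalOrder Ξ lt]
    (h : V.Pairwise (fun a b => lt a b ∨ a = b)) : rearrCoeff a lt V = 1 := by
  rw [rearrCoeff]
  have hempty : (Finset.univ.filter
      (fun p : Fin V.length × Fin V.length => p.1 < p.2 ∧ lt (V.get p.2) (V.get p.1))) = ∅ := by
    rw [Finset.filter_eq_empty_iff]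
    rintro p - ⟨hplt, hget⟩
    rcases List.pairwise_iff_get.mp h p.1 p.2 hplt with h1 | h1
    · exact asymm h1 hget
    · rw [h1] at hget
      exact irrefl_of lt _ hget
  rw [hempty, Finset.prod_empty]

theorem rearrCoeff_swap [IsStrictTotalOrder Ξ lt] (μ ν : Ξ) (hμν : lt μ ν) :
    ∀ (pre suf : List Ξ),
      rearrCoeff a lt (pre ++ ν :: μ :: suf) = a ν μ * rearrCoeff a lt (pre ++ μ :: ν :: suf) := by
  intro pre
  induction pre with
  | nil =>
      intro suf
      simp only [List.nil_append]
      rw [rearrCoeff_cons, rearrCoeff_cons, rearrCoeff_cons, rearrCoeff_cons,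
        hdF_cons, hdF_cons, if_pos hμν, if_neg (asymm hμν)]
      ring
  | cons x pre ih =>
      intro suf
      simp only [List.cons_append]
      rw [rearrCoeff_cons, rearrCoeff_cons, ih suf,
        hdF_perm a lt x (l₁ := pre ++ ν :: μ :: suf) (l₂ := pre ++ μ :: ν :: suf)
          (List.Perm.append_left pre (List.Perm.swap μ ν suf))]
      ring

end CoeffHelpers


/-- **Lemma (rearrangement).** Under conditions (a)–(c), for any finite sequence `V`,
letting `Π(V)` be its unique nondecreasing rearrangement (formalized as any `W` which is a
nondecreasing permutation of `V`): if `Π(V) ∉ P(Ξ,◁,h)` then `z_V` lies in the span of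
the `z_U` with `U ∈ P(Ξ,◁,h)`, `U ◁_R Π(V)`; if `Π(V) ∈ P(Ξ,◁,h)` then
`z_V ∈ (∏_{i<j, ν_i ▷ ν_j} a_{ν_i,ν_j})·z_{Π(V)}` plus that span. -/
theorem rearrangement
    {k σ H : Type*} [Field k] [Nonempty σ] [DecidableEq σ] [Ring H] [Algebra k H]
    (𝒜 : (σ →₀ ℕ) → Submodule k H) (hH : IsConnGradedAlg (k := k) 𝒜)
    {Ξ : Type*} (z : Ξ → H) (d : Ξ → σ →₀ ℕ)
    (hz : ∀ ξ, z ξ ∈ 𝒜 (d ξ)) (hd : ∀ ξ, d ξ ≠ 0)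
    (lt : Ξ → Ξ → Prop) (hlt : IsStrictTotalOrder Ξ lt)
    (h : Ξ → ℕ∞) (hh : ∀ ξ, 2 ≤ h ξ)
    (a : Ξ → Ξ → k)
    -- condition (a)
    (hpow : ∀ ξ : Ξ, ∀ m : ℕ, h ξ = (m : ℕ∞) → z ξ ^ m ∈ Hspan (k := k) z lt h ξ)
    -- condition (b)
    (hcomm : ∀ μ ν : Ξ, lt μ ν → a ν μ ≠ 0 ∧
      z ν * z μ - a ν μ • (z μ * z ν) ∈ Hspan (k := k) z lt h ν)
    -- condition (c)
    (hwell : ∀ γ : σ →₀ ℕ, WellFounded (fun u v : {ξ : Ξ // d ξ = γ} => lt u.1 v.1)) :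
    ∀ V W : List Ξ, W.Perm V → W.Chain' (fun u v => lt u v ∨ u = v) →
      (¬ Adm lt h W →
        zProd z V ∈ Submodule.span k
          {x : H | ∃ U : List Ξ, Adm lt h U ∧ ltR d lt U W ∧ x = zProd z U}) ∧
      (Adm lt h W →
        zProd z V - rearrCoeff a lt V • zProd z W ∈ Submodule.span k
          {x : H | ∃ U : List Ξ, Adm lt h U ∧ ltR d lt U W ∧ x = zProd z U}) := by
  classical
  obtain ⟨hInt, h1mem, hmul, -⟩ := hH
  haveI := hlt
  haveI := isTrans_le (lt := lt)
  haveI := isAntisymm_le (lt := lt)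
  haveI := isTotal_le (lt := lt)
  letI : DecidableRel lt := fun _ _ => Classical.propDecidable _
  letI : DecidableRel (fun a b : Ξ => lt a b ∨ a = b) := fun _ _ => Classical.propDecidable _
  letI : LinearOrder Ξ := linearOrderOfSTO lt
  suffices hmain : ∀ γ : σ →₀ ℕ, ∀ q : List Ξ × List Ξ, degList d q.1 = γ →
      q.2.Perm q.1 → q.2.Chain' (fun u v => lt u v ∨ u = v) →
      (¬ Adm lt h q.2 →
        zProd z q.1 ∈ Submodule.span k
          {x : H | ∃ U : List Ξ, Adm lt h U ∧ ltR d lt U q.2 ∧ x = zProd z U}) ∧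
      (Adm lt h q.2 →
        zProd z q.1 - rearrCoeff a lt q.1 • zProd z q.2 ∈ Submodule.span k
          {x : H | ∃ U : List Ξ, Adm lt h U ∧ ltR d lt U q.2 ∧ x = zProd z U}) by
    intro V W hperm hchain
    exact hmain (degList d V) (V, W) rfl hperm hchain
  intro γ
  -- well-foundedness of `lt` on the elements of degree at most `γ`
  have hwfS : WellFounded (fun u v : {ξ : Ξ // d ξ ≤ γ} => lt u.1 v.1) := by
    have hfin : ∀ F : Finset (σ →₀ ℕ), Set.WellFoundedOn {ξ : Ξ | d ξ ∈ F} lt := by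
      intro F
      induction F using Finset.induction_on with
      | empty =>
          have hempty : {ξ : Ξ | d ξ ∈ (∅ : Finset (σ →₀ ℕ))} = ∅ := by
            ext x; simp
          rw [hempty]
          exact Set.wellFoundedOn_empty lt
      | @insert ν F' hni ih =>
          have hdecomp : {ξ : Ξ | d ξ ∈ insert ν F'} =
              {ξ : Ξ | d ξ = ν} ∪ {ξ : Ξ | d ξ ∈ F'} := by
            ext x; simp [Finset.mem_insert]
          rw [hdecomp]
          exact Set.WellFoundedOn.union (hwell ν) ih
    have h2 : Set.WellFoundedOn {ξ : Ξ | d ξ ∈ Finset.Iic γ} lt := hfin (Finset.Iic γ)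
    have h3 : {ξ : Ξ | d ξ ∈ Finset.Iic γ} = {ξ : Ξ | d ξ ≤ γ} := by
      ext x; simp [Finset.mem_Iic]
    rw [h3] at h2
    exact h2
  haveI : WellFoundedLT {ξ : Ξ // d ξ ≤ γ} := ⟨hwfS⟩
  set e : Ξ → WithBot {ξ : Ξ // d ξ ≤ γ} :=
    fun x => if hx : d x ≤ γ then ((⟨x, hx⟩ : {ξ : Ξ // d ξ ≤ γ}) : WithBot {ξ : Ξ // d ξ ≤ γ})
      else ⊥ with he
  set tup : List Ξ → (Fin (wt γ) → WithBot {ξ : Ξ // d ξ ≤ γ}) :=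
    fun L i => (L[(i : ℕ)]?).elim ⊥ e with htupdef
  set PL : (Fin (wt γ) → WithBot {ξ : Ξ // d ξ ≤ γ}) →
      (Fin (wt γ) → WithBot {ξ : Ξ // d ξ ≤ γ}) → Prop :=
    Pi.Lex (· < ·) (fun {_} => (· < ·)) with hPLdef
  have hwfPL : WellFounded PL :=
    Pi.Lex.wellFounded (· < ·) (fun _ => (wellFounded_lt : WellFounded
      ((· < ·) : WithBot {ξ : Ξ // d ξ ≤ γ} → WithBot {ξ : Ξ // d ξ ≤ γ} → Prop)))
  set Rel : (List Ξ × List Ξ) → (List Ξ × List Ξ) → Prop :=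
    fun q₁ q₂ => Prod.Lex PL PL (tup q₁.2.reverse, tup q₁.1) (tup q₂.2.reverse, tup q₂.1)
    with hReldef
  have hwfRel : WellFounded Rel :=
    InvImage.wf (fun q : List Ξ × List Ξ => (tup q.2.reverse, tup q.1))
      (hwfPL.prod_lex hwfPL)
  -- the decrease lemma for the measure
  have hdec : ∀ L₁ L₂ : List Ξ, (∀ x ∈ L₁, d x ≤ γ) → (∀ x ∈ L₂, d x ≤ γ) →
      L₂.length ≤ wt γ → ltFromLeft lt L₁ L₂ → PL (tup L₁) (tup L₂) := by
    rintro L₁ L₂ hL₁ hL₂ hlen ⟨l, hl1, hlmin, hag, b₁, b₂, hb₁, hb₂, hb⟩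
    have hlL₂ : l ≤ L₂.length := hlmin.trans (min_le_right _ _)
    refine ⟨⟨l - 1, by omega⟩, ?_, ?_⟩
    · intro j hj
      have hjl : (j : ℕ) + 1 < l := by
        have : (j : ℕ) < l - 1 := hj
        omega
      show (L₁[(j : ℕ)]?).elim ⊥ e = (L₂[(j : ℕ)]?).elim ⊥ e
      rw [hag j hjl]
    · show ((L₁[l-1]?).elim ⊥ e) < ((L₂[l-1]?).elim ⊥ e)
      rw [hb₁, hb₂]
      have hd₁ : d b₁ ≤ γ := hL₁ b₁ (List.mem_of_getElem? hb₁)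
      have hd₂ : d b₂ ≤ γ := hL₂ b₂ (List.mem_of_getElem? hb₂)
      show e b₁ < e b₂
      rw [he]
      simp only [dif_pos hd₁, dif_pos hd₂]
      rw [WithBot.coe_lt_coe]
      exact hb
  intro q
  refine hwfRel.induction (C := fun q => degList d q.1 = γ →
      q.2.Perm q.1 → q.2.Chain' (fun u v => lt u v ∨ u = v) →
      (¬ Adm lt h q.2 →
        zProd z q.1 ∈ Submodule.span k
          {x : H | ∃ U : List Ξ, Adm lt h U ∧ ltR d lt U q.2 ∧ x = zProd z U}) ∧
      (Adm lt h q.2 →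
        zProd z q.1 - rearrCoeff a lt q.1 • zProd z q.2 ∈ Submodule.span k
          {x : H | ∃ U : List Ξ, Adm lt h U ∧ ltR d lt U q.2 ∧ x = zProd z U})) q ?_
  clear q
  rintro ⟨V, W⟩ IH hdeg hperm hchain
  simp only at IH hdeg hperm hchain ⊢
  have hdegW : degList d W = γ := (degList_perm d hperm).trans hdeg
  have hentV : ∀ x ∈ V, d x ≤ γ := fun x hx => hdeg ▸ mem_deg_le hx
  have hentW : ∀ x ∈ W, d x ≤ γ := fun x hx => hdegW ▸ mem_deg_le hx
  have hlenV : V.length ≤ wt γ := by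
    have := length_le_wt_degList hd V
    rwa [hdeg] at this
  have hsub : ∀ W'' : List Ξ, ltR d lt W'' W →
      Submodule.span k {x : H | ∃ U : List Ξ, Adm lt h U ∧ ltR d lt U W'' ∧ x = zProd z U} ≤
      Submodule.span k {x : H | ∃ U : List Ξ, Adm lt h U ∧ ltR d lt U W ∧ x = zProd z U} := by
    intro W'' hW''
    apply Submodule.span_mono
    rintro x ⟨U, hU, hUR, rfl⟩
    exact ⟨U, hU, ltR_trans hUR hW'', rfl⟩
  -- the step lemma, handling products of the family along a list whose sorted version is
  -- strictly smaller than `W`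
  have hstep : ∀ (V'' U P : List Ξ) (β : Ξ) (B : List Ξ),
      V''.Perm (P ++ U) → W.Perm (P ++ B) → β ∈ B → (∀ b ∈ B, lt b β ∨ b = β) →
      (∀ u ∈ U, lt u β) → U ≠ [] → degList d V'' = γ →
      zProd z V'' ∈ Submodule.span k
        {x : H | ∃ U' : List Ξ, Adm lt h U' ∧ ltR d lt U' W ∧ x = zProd z U'} := by
    intro V'' U P β B hV''perm hWperm hβB hBle hUlt hUne hdegV''
    set W'' : List Ξ := List.insertionSort (fun a b => lt a b ∨ a = b) V'' with hW''def
    have hW''perm : W''.Perm V'' := List.perm_insertionSort _ _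
    have hW''chain : W''.Chain' (fun a b => lt a b ∨ a = b) :=
      List.isChain_iff_pairwise.mpr (List.pairwise_insertionSort _ _)
    have hkey : ltFromLeft lt W''.reverse W.reverse :=
      key_lemma hβB hBle hUne hUlt hWperm (hW''perm.trans hV''perm) hchain hW''chain
    have hdegW'' : degList d W'' = γ := (degList_perm d hW''perm).trans hdegV''
    have hltRW'' : ltR d lt W'' W := Or.inr ⟨hdegW''.trans hdegW.symm, hkey⟩
    have hentW'' : ∀ x ∈ W''.reverse, d x ≤ γ := by
      intro x hx
      rw [List.mem_reverse] at hx
      exact hdegW'' ▸ mem_deg_le hx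
    have hlenWr : W.reverse.length ≤ wt γ := by
      rw [List.length_reverse]
      have := length_le_wt_degList hd W
      rwa [hdegW] at this
    have hRel : Rel (V'', W'') (V, W) := by
      rw [hReldef]
      exact Prod.Lex.left _ _ (hdec W''.reverse W.reverse hentW''
        (fun x hx => hentW x (List.mem_reverse.mp hx)) hlenWr hkey)
    have hIH := IH (V'', W'') hRel hdegV'' hW''perm hW''chain
    by_cases hAdm'' : Adm lt h W''
    · have h2 := (hsub W'' hltRW'') (hIH.2 hAdm'')
      have hW''mem : zProd z W'' ∈ Submodule.span k
          {x : H | ∃ U' : List Ξ, Adm lt h U' ∧ ltR d lt U' W ∧ x = zProd z U'} :=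
        Submodule.subset_span ⟨W'', hAdm'', hltRW'', rfl⟩
      have h3 := Submodule.add_mem _ h2
        (Submodule.smul_mem _ (rearrCoeff a lt V'') hW''mem)
      rwa [sub_add_cancel] at h3
    · exact (hsub W'' hltRW'') (hIH.1 hAdm'')
  by_cases hVs : V.Chain' (fun u v => lt u v ∨ u = v)
  · -- `V` is already sorted, so `V = W`
    obtain rfl : V = W := (List.Perm.eq_of_pairwise'
      (List.isChain_iff_pairwise.mp hchain) (List.isChain_iff_pairwise.mp hVs) hperm).symm
    constructor
    · intro hnAdm
      obtain ⟨ξ0, hξ0⟩ : ∃ ξ, ¬ ((cnt V ξ : ℕ∞) < h ξ) := by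
        by_contra hno
        push_neg at hno
        exact hnAdm ⟨hchain, fun ξ => hno ξ⟩
      have hle0 : h ξ0 ≤ (cnt V ξ0 : ℕ∞) := not_lt.mp hξ0
      have hnetop : h ξ0 ≠ ⊤ := by
        intro htop
        rw [htop, top_le_iff] at hle0
        exact WithTop.coe_ne_top hle0
      obtain ⟨m, hm⟩ := WithTop.ne_top_iff_exists.mp hnetop
      have hm2 : 1 ≤ m := by
        rcases Nat.eq_zero_or_pos m with rfl | h5
        · exfalso
          have h4 := hh ξ0
          rw [← hm] at h4
          exact (by norm_num : ¬ (2 : ℕ∞) ≤ ((0 : ℕ) : ℕ∞)) h4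
        · exact h5
      have hmcnt : m ≤ cnt V ξ0 := by
        rw [← hm] at hle0
        exact WithTop.coe_le_coe.mp hle0
      obtain ⟨P₁, P₂, hVblock⟩ := sorted_block hchain hmcnt
      have hd0 : m • d ξ0 ≠ 0 := by
        intro h0
        have hrw : m • d ξ0 = d ξ0 + (m - 1) • d ξ0 := by
          conv_lhs => rw [show m = 1 + (m - 1) by omega]
          rw [add_nsmul, one_nsmul]
        rw [hrw] at h0
        exact hd ξ0 (finsupp_add_eq_zero h0)
      have hpm : z ξ0 ^ m ∈ 𝒜 (m • d ξ0) := by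
        have h4 := zProd_mem 𝒜 h1mem hmul hz (List.replicate m ξ0)
        rwa [zProd_replicate, degList_replicate] at h4
      have href := hspan_refine 𝒜 hInt h1mem hmul hz (d := d) hd0
        (hpow ξ0 m hm.symm) hpm
      set L : H →ₗ[k] H :=
        (LinearMap.mulRight k (zProd z P₂)).comp (LinearMap.mulLeft k (zProd z P₁)) with hLdef
      have hLapp : ∀ y : H, L y = zProd z P₁ * y * zProd z P₂ := by
        intro y
        simp [hLdef]
      have hLmem : L (z ξ0 ^ m) ∈ Submodule.span k (L '' {y : H | ∃ U : List Ξ,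
          Adm lt h U ∧ (∀ ν ∈ U.getLast?, lt ν ξ0) ∧ degList d U = m • d ξ0 ∧ U ≠ [] ∧
          y = zProd z U}) := by
        have h4 := Submodule.mem_map_of_mem (f := L) href
        rwa [Submodule.map_span] at h4
      have hLzV : L (z ξ0 ^ m) = zProd z V := by
        rw [hLapp, hVblock, zProd_append, zProd_append, zProd_replicate]
      rw [← hLzV]
      refine (Submodule.span_le.mpr ?_) hLmem
      rintro - ⟨y, ⟨U, hUAdm, hUlast, hUdeg, hUne, rfl⟩, rfl⟩
      have hzz : L (zProd z U) = zProd z (P₁ ++ U ++ P₂) := by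
        rw [hLapp, zProd_append, zProd_append]
      rw [SetLike.mem_coe, hzz]
      refine hstep (P₁ ++ U ++ P₂) U (P₁ ++ P₂) ξ0 (List.replicate m ξ0)
        (perm_mid P₁ U P₂) ?_ (List.mem_replicate.mpr ⟨by omega, rfl⟩)
        (fun b hb => Or.inr (List.eq_of_mem_replicate hb))
        (all_lt_of_last hUAdm.1 hUlast) hUne ?_
      · rw [hVblock]
        exact perm_mid P₁ (List.replicate m ξ0) P₂
      · have h5 : degList d (P₁ ++ U ++ P₂) =
            degList d P₁ + degList d U + degList d P₂ := by
          rw [degList_append, degList_append]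
        have h6 : degList d V =
            degList d P₁ + degList d (List.replicate m ξ0) + degList d P₂ := by
          rw [hVblock, degList_append, degList_append]
        rw [h5, hUdeg, ← degList_replicate d m ξ0, ← h6, hdeg]
    · intro _
      rw [rearrCoeff_sorted a lt (List.isChain_iff_pairwise.mp hVs), one_smul, sub_self]
      exact Submodule.zero_mem _
  · -- `V` has an adjacent inversion
    obtain ⟨pre, ν, μ, suf, hVeq, hμν⟩ := not_chain'_decomp hVs
    set V₂ : List Ξ := pre ++ μ :: ν :: suf with hV₂def
    have hVV₂ : V.Perm V₂ := by
      rw [hVeq, hV₂def]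
      exact List.Perm.append_left pre (List.Perm.swap μ ν suf)
    have hV₂perm : W.Perm V₂ := hperm.trans hVV₂
    have hdegV₂ : degList d V₂ = γ := (degList_perm d hVV₂.symm).trans hdeg
    have hentV₂ : ∀ x ∈ V₂, d x ≤ γ := fun x hx => hdegV₂ ▸ mem_deg_le hx
    have hfl : ltFromLeft lt V₂ V := by
      refine ⟨pre.length + 1, by omega, ?_, ?_, ?_⟩
      · rw [hVeq, hV₂def]
        simp only [List.length_append, List.length_cons]
        omega
      · intro i hi
        have hiA : i < pre.length := by omega
        rw [hVeq, hV₂def, List.getElem?_append_left hiA, List.getElem?_append_left hiA]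
      · refine ⟨μ, ν, ?_, ?_, hμν⟩
        · rw [hV₂def, Nat.add_sub_cancel, List.getElem?_append_right (le_refl _), Nat.sub_self]
          rfl
        · rw [hVeq, Nat.add_sub_cancel, List.getElem?_append_right (le_refl _), Nat.sub_self]
          rfl
    have hRel₂ : Rel (V₂, W) (V, W) := by
      rw [hReldef]
      exact Prod.Lex.right _ (hdec V₂ V hentV₂ hentV hlenV hfl)
    have hIH₂ := IH (V₂, W) hRel₂ hdegV₂ hV₂perm hchain
    have hR : z ν * z μ - a ν μ • (z μ * z ν) ∈ Hspan (k := k) z lt h ν := (hcomm μ ν hμν).2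
    have hRdeg : z ν * z μ - a ν μ • (z μ * z ν) ∈ 𝒜 (d ν + d μ) := by
      refine sub_mem (hmul _ _ _ (hz ν) _ (hz μ)) (Submodule.smul_mem _ _ ?_)
      have h4 := hmul _ _ _ (hz μ) _ (hz ν)
      rwa [add_comm (d μ) (d ν)] at h4
    have hd0 : d ν + d μ ≠ 0 := fun h0 => hd ν (finsupp_add_eq_zero h0)
    have href := hspan_refine 𝒜 hInt h1mem hmul hz (d := d) hd0 hR hRdeg
    set L : H →ₗ[k] H :=
      (LinearMap.mulRight k (zProd z suf)).comp (LinearMap.mulLeft k (zProd z pre)) with hLdef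
    have hLapp : ∀ y : H, L y = zProd z pre * y * zProd z suf := by
      intro y
      simp [hLdef]
    have hLmem : L (z ν * z μ - a ν μ • (z μ * z ν)) ∈
        Submodule.span k (L '' {y : H | ∃ U : List Ξ,
          Adm lt h U ∧ (∀ ν' ∈ U.getLast?, lt ν' ν) ∧ degList d U = d ν + d μ ∧ U ≠ [] ∧
          y = zProd z U}) := by
      have h4 := Submodule.mem_map_of_mem (f := L) href
      rwa [Submodule.map_span] at h4
    have hLspan : L (z ν * z μ - a ν μ • (z μ * z ν)) ∈ Submodule.span k
        {x : H | ∃ U' : List Ξ, Adm lt h U' ∧ ltR d lt U' W ∧ x = zProd z U'} := by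
      refine (Submodule.span_le.mpr ?_) hLmem
      rintro - ⟨y, ⟨U, hUAdm, hUlast, hUdeg, hUne, rfl⟩, rfl⟩
      have hzz : L (zProd z U) = zProd z (pre ++ U ++ suf) := by
        rw [hLapp, zProd_append, zProd_append]
      rw [SetLike.mem_coe, hzz]
      have hVeq' : V = pre ++ [ν, μ] ++ suf := by
        rw [hVeq, List.append_assoc]
        rfl
      refine hstep (pre ++ U ++ suf) U (pre ++ suf) ν [ν, μ]
        (perm_mid pre U suf) ?_ (by simp) ?_
        (all_lt_of_last hUAdm.1 hUlast) hUne ?_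
      · refine hperm.trans ?_
        rw [hVeq']
        exact perm_mid pre [ν, μ] suf
      · intro b hb
        rcases List.mem_cons.mp hb with rfl | hb'
        · exact Or.inr rfl
        · rcases List.mem_cons.mp hb' with rfl | hb''
          · exact Or.inl hμν
          · simp at hb''
      · have h5 : degList d (pre ++ U ++ suf) =
            degList d pre + degList d U + degList d suf := by
          rw [degList_append, degList_append]
        have h6 : γ = degList d pre + (d ν + (d μ + degList d suf)) := by
          rw [← hdeg, hVeq, degList_append, degList_cons, degList_cons]
        rw [h5, hUdeg, h6]
        abel
    have hsplit : zProd z V = L (z ν * z μ - a ν μ • (z μ * z ν)) + a ν μ • zProd z V₂ := by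
      have h7 : zProd z V = L (z ν * z μ) := by
        rw [hLapp, hVeq, zProd_append, zProd_cons, zProd_cons]
        simp only [mul_assoc]
      have h8 : zProd z V₂ = L (z μ * z ν) := by
        rw [hLapp, hV₂def, zProd_append, zProd_cons, zProd_cons]
        simp only [mul_assoc]
      rw [map_sub, map_smul, ← h7, ← h8]
      abel
    constructor
    · intro hnAdm
      have h2 := hIH₂.1 hnAdm
      rw [hsplit]
      exact Submodule.add_mem _ hLspan (Submodule.smul_mem _ _ h2)
    · intro hAdm
      have h2 := hIH₂.2 hAdm
      have hco : rearrCoeff a lt V = a ν μ * rearrCoeff a lt V₂ := by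
        rw [hVeq, hV₂def]
        exact rearrCoeff_swap a lt μ ν hμν pre suf
      have hfinal : zProd z V - rearrCoeff a lt V • zProd z W =
          L (z ν * z μ - a ν μ • (z μ * z ν))
            + a ν μ • (zProd z V₂ - rearrCoeff a lt V₂ • zProd z W) := by
        rw [hsplit, hco, smul_sub, mul_smul]
        abel
      rw [hfinal]
      exact Submodule.add_mem _ hLspan (Submodule.smul_mem _ _ h2)


end AdamsPaper
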